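/- For every α ∈ (0,2) and c > 0, the SIGTRON function s_{α,c} is differentiable at every x ∈ ℝ, and its derivative is given by s_{α,c}'(x) = c^{α−1} · (1 − s_{α,c}(x))^α · (s_{α,c}(x))^{2−α} for all x ∈ ℝ. -/

import Mathlib

/-- `c_α = c^{1−α}/(α−1)` (real power). -/
noncomputable def cA (α c : ℝ) : ℝ := c ^ (1 - α) / (α - 1)

/-- SIGTRON: extended asymmetric sigmoid with Perceptron. -/
noncomputable def sigtron (α c : ℝ) (x : ℝ) : ℝ :=
  if α = 1 then 1 / (1 + Real.exp (-x))
  else if α < 1 then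
    if x ≤ -(cA α c) then 1 / (1 + (1 + x / cA α c) ^ ((1 : ℝ) / (1 - α))) else 1
  else
    if -(cA α c) < x then 1 / (1 + (1 + x / cA α c) ^ ((1 : ℝ) / (1 - α))) else 0

open Real Filter

lemma hasDerivAt_zero_of_bound {f : ℝ → ℝ} {x0 K q : ℝ} (hq : 0 < q) (hK : 0 ≤ K)
    (h : ∀ x, |f x - f x0| ≤ K * |x - x0| ^ (1 + q)) : HasDerivAt f 0 x0 := by
  rw [hasDerivAt_iff_tendsto]
  apply squeeze_zero_norm (a := fun x => K * |x - x0| ^ q)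
  · intro x
    rcases eq_or_ne x x0 with rfl | hx
    · simp [Real.zero_rpow hq.ne']
    · have hx0 : (0:ℝ) < |x - x0| := abs_pos.2 (sub_ne_zero.2 hx)
      have heq : ‖x - x0‖⁻¹ * ‖f x - f x0 - (x - x0) • (0:ℝ)‖
          = |x - x0|⁻¹ * |f x - f x0| := by simp [Real.norm_eq_abs]
      rw [Real.norm_eq_abs, abs_of_nonneg (by positivity), heq]
      calc |x - x0|⁻¹ * |f x - f x0| ≤ |x - x0|⁻¹ * (K * |x - x0| ^ (1 + q)) :=
            mul_le_mul_of_nonneg_left (h x) (by positivity)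
        _ = K * |x - x0| ^ q := by
            rw [Real.rpow_add hx0, Real.rpow_one,
              show |x - x0|⁻¹ * (K * (|x - x0| * |x - x0| ^ q))
                = (|x - x0|⁻¹ * |x - x0|) * (K * |x - x0| ^ q) by ring,
              inv_mul_cancel₀ hx0.ne', one_mul]
  · have h1 : Tendsto (fun x => |x - x0|) (nhds x0) (nhds 0) := by
      have : Continuous fun x : ℝ => |x - x0| := by continuity
      simpa using this.tendsto x0
    have h2 : Tendsto (fun x => |x - x0| ^ q) (nhds x0) (nhds 0) := by
      have := (Real.continuousAt_rpow_const 0 q (Or.inr hq.le)).tendsto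
      rw [Real.zero_rpow hq.ne'] at this
      exact this.comp h1
    simpa using h2.const_mul K

lemma cA_ne_zero {α c : ℝ} (hα1 : α ≠ 1) (hc : 0 < c) : cA α c ≠ 0 := by
  unfold cA
  exact div_ne_zero (ne_of_gt (Real.rpow_pos_of_pos hc _)) (sub_ne_zero.2 hα1)

lemma key_coeff {α c : ℝ} (hα1 : α ≠ 1) (hc : 0 < c) :
    (cA α c)⁻¹ * ((1:ℝ)/(1-α)) = -(c ^ (α-1)) := by
  have h1 : c ^ (α-1) = (c ^ (1-α))⁻¹ := by
    rw [← Real.rpow_neg hc.le]; ring_nf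
  have h2 : c ^ (1-α) ≠ 0 := ne_of_gt (Real.rpow_pos_of_pos hc _)
  have h3 : (1:ℝ) - α ≠ 0 := sub_ne_zero.2 (Ne.symm hα1)
  rw [cA, h1]
  field_simp
  ring

lemma interior_hasDerivAt {α c x : ℝ} (hα1 : α ≠ 1) (hc : 0 < c)
    (ht : 0 < 1 + x / cA α c) :
    HasDerivAt (fun y => (1 + (1 + y / cA α c) ^ ((1:ℝ)/(1-α)))⁻¹)
      (c ^ (α-1) * (1 - (1 + (1 + x / cA α c) ^ ((1:ℝ)/(1-α)))⁻¹) ^ α *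
        ((1 + (1 + x / cA α c) ^ ((1:ℝ)/(1-α)))⁻¹) ^ (2-α)) x := by
  set cα := cA α c with hcadef
  have hcα : cα ≠ 0 := cA_ne_zero hα1 hc
  set p : ℝ := (1:ℝ)/(1-α) with hp
  set t : ℝ := 1 + x / cα with htd
  have hu : 0 < t ^ p := Real.rpow_pos_of_pos ht _
  set u : ℝ := t ^ p with hud
  have h1u : (0:ℝ) < 1 + u := by linarith
  have h1 : HasDerivAt (fun y => 1 + y / cα) (cα⁻¹) x := by
    simpa [one_div] using ((hasDerivAt_id x).div_const cα).const_add 1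
  have h2 : HasDerivAt (fun y => (1 + y / cα) ^ p) (cα⁻¹ * p * t ^ (p-1)) x :=
    h1.rpow_const (Or.inl ht.ne')
  have h3 : HasDerivAt (fun y => (1 + (1 + y / cα) ^ p)⁻¹)
      (-(cα⁻¹ * p * t ^ (p-1)) / (1 + u)^2) x := (h2.const_add 1).inv h1u.ne'
  convert h3 using 1
  have hA : cα⁻¹ * p = -(c ^ (α-1)) := key_coeff hα1 hc
  have h3α : (1:ℝ) - α ≠ 0 := sub_ne_zero.2 (Ne.symm hα1)
  have hB : t ^ (p-1) = u ^ α := by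
    rw [hud, ← Real.rpow_mul ht.le]
    congr 1
    rw [hp]; field_simp; ring
  have hC : 1 - (1+u)⁻¹ = u / (1+u) := by field_simp; ring
  have hD : (u / (1+u)) ^ α = u ^ α / (1+u) ^ α := Real.div_rpow hu.le h1u.le α
  have hE : ((1+u)⁻¹) ^ ((2:ℝ)-α) = ((1+u) ^ ((2:ℝ)-α))⁻¹ := Real.inv_rpow h1u.le _
  have hF : (1+u) ^ α * (1+u) ^ ((2:ℝ)-α) = (1+u)^2 := by
    rw [← Real.rpow_add h1u, show α + ((2:ℝ)-α) = (2:ℝ) by ring]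
    rw [show ((2:ℝ):ℝ) = ((2:ℕ):ℝ) by norm_num, Real.rpow_natCast]
  have hαpos : (0:ℝ) < (1+u) ^ α := Real.rpow_pos_of_pos h1u _
  have h2αpos : (0:ℝ) < (1+u) ^ ((2:ℝ)-α) := Real.rpow_pos_of_pos h1u _
  rw [hC, hD, hE, hA, hB]
  rw [div_eq_div_iff (by positivity) (by positivity)] at *
  field_simp
  nlinarith [hF, hαpos, h2αpos, Real.rpow_pos_of_pos hu α]

theorem sigtron_stmt6 (α c : ℝ) (hα : α ∈ Set.Ioo (0 : ℝ) 2) (hc : 0 < c) (x : ℝ) :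
    HasDerivAt (sigtron α c)
      (c ^ (α - 1) * (1 - sigtron α c x) ^ α * (sigtron α c x) ^ (2 - α)) x := by
  obtain ⟨hα0, hα2⟩ := hα
  rcases eq_or_ne α 1 with rfl | h1
  · -- logistic case
    have hpos : (0:ℝ) < 1 + Real.exp (-x) := by positivity
    have hfun : sigtron 1 c = fun y => (1 + Real.exp (-y))⁻¹ := by
      funext y; simp [sigtron, one_div]
    have hd : HasDerivAt (fun y => (1 + Real.exp (-y))⁻¹)
        (-(-Real.exp (-x)) / (1 + Real.exp (-x))^2) x := by
      have he : HasDerivAt (fun y : ℝ => Real.exp (-y)) (-Real.exp (-x)) x := by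
        simpa [Function.comp_def] using (Real.hasDerivAt_exp (-x)).comp x ((hasDerivAt_id x).neg)
      exact (he.const_add 1).inv hpos.ne'
    rw [hfun]
    convert hd using 1
    simp only [Real.rpow_one, sub_self, Real.rpow_zero]
    rw [show (2:ℝ) - 1 = 1 by norm_num, Real.rpow_one]
    field_simp
    ring
  · -- α ≠ 1
    have hcα : cA α c ≠ 0 := cA_ne_zero h1 hc
    have hp0 : (1:ℝ) - α ≠ 0 := sub_ne_zero.2 (Ne.symm h1)
    rcases lt_or_gt_of_ne h1 with hlt | hgt
    · -- α < 1 : cα < 0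
      have hcneg : cA α c < 0 :=
        div_neg_of_pos_of_neg (Real.rpow_pos_of_pos hc _) (by linarith)
      have hrw : ∀ y : ℝ, 1 + y / cA α c = (cA α c + y) / cA α c := by
        intro y; field_simp
      have hiff : ∀ y : ℝ, y < -(cA α c) ↔ 0 < 1 + y / cA α c := by
        intro y
        rw [hrw y, div_pos_iff]
        constructor
        · intro h; exact Or.inr ⟨by linarith, hcneg⟩
        · rintro (⟨h, h'⟩ | ⟨h, h'⟩) <;> linarith
      have hiffle : ∀ y : ℝ, y ≤ -(cA α c) ↔ 0 ≤ 1 + y / cA α c := by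
        intro y
        constructor
        · intro h
          rcases eq_or_lt_of_le h with rfl | h'
          · rw [hrw]; simp
          · exact ((hiff y).1 h').le
        · intro h
          by_contra hcon
          push_neg at hcon
          have : 1 + y / cA α c < 0 := by
            rw [hrw, div_neg_iff]
            exact Or.inl ⟨by linarith, hcneg⟩
          linarith
      rcases lt_trichotomy x (-(cA α c)) with hx | hx | hx
      · -- interior
        have ht : 0 < 1 + x / cA α c := (hiff x).1 hx
        have hopen : IsOpen {y : ℝ | 0 < 1 + y / cA α c} :=
          isOpen_lt continuous_const (by continuity)
        have hev : sigtron α c =ᶠ[nhds x]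
            (fun y => (1 + (1 + y / cA α c) ^ ((1:ℝ)/(1-α)))⁻¹) :=
          eventually_of_mem (hopen.mem_nhds ht) (fun y hy => by
            have hy' : y ≤ -(cA α c) := ((hiff y).2 hy).le
            simp [sigtron, h1, hlt, hy', one_div])
        have hsx : sigtron α c x = (1 + (1 + x / cA α c) ^ ((1:ℝ)/(1-α)))⁻¹ := by
          simp [sigtron, h1, hlt, hx.le, one_div]
        rw [hsx]
        exact (interior_hasDerivAt h1 hc ht).congr_of_eventuallyEq hev
      · -- boundary
        subst hx
        have hs0 : sigtron α c (-(cA α c)) = 1 := by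
          simp only [sigtron, if_neg h1, if_pos hlt, if_pos le_rfl]
          rw [show 1 + -cA α c / cA α c = 0 by field_simp; norm_num,
            Real.zero_rpow (by simpa using hp0 : (1:ℝ)/(1-α) ≠ 0)]
          norm_num
        rw [hs0, sub_self, Real.zero_rpow hα0.ne', mul_zero, zero_mul]
        have hp1 : 1 < (1:ℝ)/(1-α) := by
          rw [lt_div_iff₀ (by linarith)]; linarith
        have hKpos : (0:ℝ) < ((-(cA α c)) ^ ((1:ℝ)/(1-α)))⁻¹ := by
          have : (0:ℝ) < -(cA α c) := by linarith
          positivity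
        apply hasDerivAt_zero_of_bound (q := (1:ℝ)/(1-α) - 1)
          (K := ((-(cA α c)) ^ ((1:ℝ)/(1-α)))⁻¹) (by linarith) hKpos.le
        intro y
        rw [show 1 + ((1:ℝ)/(1-α) - 1) = (1:ℝ)/(1-α) by ring, hs0]
        by_cases hy : y ≤ -(cA α c)
        · have ht : 0 ≤ 1 + y / cA α c := (hiffle y).1 hy
          have hsy : sigtron α c y = (1 + (1 + y / cA α c) ^ ((1:ℝ)/(1-α)))⁻¹ := by
            simp [sigtron, h1, hlt, hy, one_div]
          set u : ℝ := (1 + y / cA α c) ^ ((1:ℝ)/(1-α)) with hud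
          have hu : 0 ≤ u := Real.rpow_nonneg ht _
          have h1u : (0:ℝ) < 1 + u := by linarith
          have habs : |sigtron α c y - 1| = 1 - (1+u)⁻¹ := by
            rw [hsy, abs_sub_comm, abs_of_nonneg]
            have : (1+u)⁻¹ ≤ 1 := by
              rw [inv_le_one_iff₀]; right; linarith
            linarith
          have hval : 1 - (1+u)⁻¹ = u / (1+u) := by field_simp; ring
          have hub : u / (1+u) ≤ u := div_le_self hu (by linarith)
          have htv : 1 + y / cA α c = (-(cA α c) - y) / (-(cA α c)) := by
            rw [hrw, div_eq_div_iff hcα (neg_ne_zero.2 hcα)]; ring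
          have hyabs : |y - -(cA α c)| = -(cA α c) - y := by
            rw [abs_of_nonpos (by linarith)]; ring
          have huval : u = ((-(cA α c)) ^ ((1:ℝ)/(1-α)))⁻¹ *
              |y - -(cA α c)| ^ ((1:ℝ)/(1-α)) := by
            rw [hud, htv, Real.div_rpow (by linarith) (by linarith), hyabs]
            ring
          rw [habs, hval]
          calc u / (1+u) ≤ u := hub
            _ = _ := huval
        · push_neg at hy
          have hsy : sigtron α c y = 1 := by
            simp [sigtron, h1, hlt, not_le.2 hy]
          rw [hsy, sub_self, abs_zero]
          positivity
      · -- constant region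
        have hev : sigtron α c =ᶠ[nhds x] (fun _ => (1:ℝ)) :=
          eventually_of_mem (isOpen_Ioi.mem_nhds hx) (fun y hy => by
            simp [sigtron, h1, hlt, not_le.2 (Set.mem_Ioi.1 hy)])
        have hsx : sigtron α c x = 1 := by
          simp [sigtron, h1, hlt, not_le.2 hx]
        rw [hsx, sub_self, Real.zero_rpow hα0.ne', mul_zero, zero_mul]
        exact (hasDerivAt_const x 1).congr_of_eventuallyEq hev
    · -- α > 1 : cα > 0
      have hnlt : ¬ α < 1 := not_lt.2 hgt.le
      have hcpos : 0 < cA α c :=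
        div_pos (Real.rpow_pos_of_pos hc _) (by linarith)
      have hrw : ∀ y : ℝ, 1 + y / cA α c = (cA α c + y) / cA α c := by
        intro y; field_simp
      have hiff : ∀ y : ℝ, -(cA α c) < y ↔ 0 < 1 + y / cA α c := by
        intro y
        rw [hrw y, div_pos_iff]
        constructor
        · intro h; exact Or.inl ⟨by linarith, hcpos⟩
        · rintro (⟨h, h'⟩ | ⟨h, h'⟩) <;> linarith
      rcases lt_trichotomy x (-(cA α c)) with hx | hx | hx
      · -- constant region 0
        have hev : sigtron α c =ᶠ[nhds x] (fun _ => (0:ℝ)) :=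
          eventually_of_mem (isOpen_Iio.mem_nhds hx) (fun y hy => by
            simp [sigtron, h1, hnlt, not_lt.2 (Set.mem_Iio.1 hy).le])
        have hsx : sigtron α c x = 0 := by
          simp [sigtron, h1, hnlt, not_lt.2 hx.le]
        rw [hsx, Real.zero_rpow (by intro h; linarith [sub_eq_zero.1 h] : (2:ℝ) - α ≠ 0),
          mul_zero]
        exact (hasDerivAt_const x 0).congr_of_eventuallyEq hev
      · -- boundary
        subst hx
        have hs0 : sigtron α c (-(cA α c)) = 0 := by
          simp [sigtron, h1, hnlt]
        rw [hs0, Real.zero_rpow (by intro h; linarith [sub_eq_zero.1 h] : (2:ℝ) - α ≠ 0),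
          mul_zero]
        have hq : 0 < -((1:ℝ)/(1-α)) - 1 := by
          have h1' : -((1:ℝ)/(1-α)) = 1/(α-1) := by
            rw [← neg_div, div_eq_div_iff hp0 (sub_ne_zero.2 h1)]; ring
          rw [h1']
          have : 1 < 1/(α-1) := by
            rw [lt_div_iff₀ (by linarith)]; linarith
          linarith
        have hKpos : (0:ℝ) < ((cA α c) ^ (-((1:ℝ)/(1-α))))⁻¹ := by
          positivity
        apply hasDerivAt_zero_of_bound (q := -((1:ℝ)/(1-α)) - 1)
          (K := ((cA α c) ^ (-((1:ℝ)/(1-α))))⁻¹) hq hKpos.le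
        intro y
        rw [show 1 + (-((1:ℝ)/(1-α)) - 1) = -((1:ℝ)/(1-α)) by ring, hs0]
        by_cases hy : -(cA α c) < y
        · have ht : 0 < 1 + y / cA α c := (hiff y).1 hy
          have hsy : sigtron α c y = (1 + (1 + y / cA α c) ^ ((1:ℝ)/(1-α)))⁻¹ := by
            simp [sigtron, h1, hnlt, hy, one_div]
          set u : ℝ := (1 + y / cA α c) ^ ((1:ℝ)/(1-α)) with hud
          have hu : 0 < u := Real.rpow_pos_of_pos ht _
          have h1u : (0:ℝ) < 1 + u := by linarith
          have habs : |sigtron α c y - 0| = (1+u)⁻¹ := by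
            rw [hsy, sub_zero, abs_of_nonneg (by positivity)]
          have hub : (1+u)⁻¹ ≤ u⁻¹ := by
            apply inv_anti₀ hu
            linarith
          have htv : 1 + y / cA α c = (y + cA α c) / cA α c := by
            rw [hrw]; ring_nf
          have hyabs : |y - -(cA α c)| = y + cA α c := by
            rw [abs_of_nonneg (by linarith)]; ring
          have huval : u⁻¹ = ((cA α c) ^ (-((1:ℝ)/(1-α))))⁻¹ *
              |y - -(cA α c)| ^ (-((1:ℝ)/(1-α))) := by
            rw [hud, ← Real.rpow_neg ht.le, htv,
              Real.div_rpow (by linarith) hcpos.le, hyabs]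
            ring
          rw [habs]
          calc (1+u)⁻¹ ≤ u⁻¹ := hub
            _ = _ := huval
        · have hsy : sigtron α c y = 0 := by
            simp [sigtron, h1, hnlt, hy]
          rw [hsy, sub_zero, abs_zero]
          positivity
      · -- interior
        have ht : 0 < 1 + x / cA α c := (hiff x).1 hx
        have hopen : IsOpen {y : ℝ | 0 < 1 + y / cA α c} :=
          isOpen_lt continuous_const (by continuity)
        have hev : sigtron α c =ᶠ[nhds x]
            (fun y => (1 + (1 + y / cA α c) ^ ((1:ℝ)/(1-α)))⁻¹) :=
          eventually_of_mem (hopen.mem_nhds ht) (fun y hy => by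
            have hy' : -(cA α c) < y := (hiff y).2 hy
            simp [sigtron, h1, hnlt, hy', one_div])
        have hsx : sigtron α c x = (1 + (1 + x / cA α c) ^ ((1:ℝ)/(1-α)))⁻¹ := by
          simp [sigtron, h1, hnlt, hx, one_div]
        rw [hsx]
        exact (interior_hasDerivAt h1 hc ht).congr_of_eventuallyEq hev
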